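/- Let n ≥ 1 and let e_1, e_2, …, e_n be non-negative integers satisfying 1·e_1 + 2·e_2 + ⋯ + n·e_n = n. Then the rational number n! · ∏_{j=1}^n 1/(j!^{e_j} · e_j!) · (e_1 + e_2 + ⋯ + e_n) · ∏_{j=1}^n j^{e_j} is an integer divisible by n. -/

import Mathlib

open Finset Nat

private lemma fac_pow_dvd {j m : ℕ} (hj : 1 ≤ j) :
    (j - 1)! ^ m * m ! ∣ (j * m)! := by
  have h1 : (j - 1)! ^ m * m ! ∣ j ! ^ m * m ! :=
    mul_dvd_mul_right (pow_dvd_pow_of_dvd (Nat.factorial_dvd_factorial (Nat.sub_le j 1)) m) _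
  have h2 : j ! ^ m * m ! ∣ (m * j)! :=
    ⟨Nat.uniformBell m j, by
      rw [← Nat.uniformBell_mul_eq m (by omega : j ≠ 0)]; ring⟩
  rw [mul_comm j m]
  exact h1.trans h2

private lemma prod_dvd_fac (S : Finset ℕ) (f : ℕ → ℕ) (hS : ∀ j ∈ S, 1 ≤ j) :
    (∏ j ∈ S, ((j - 1)! ^ (f j) * (f j)!)) ∣ (∑ j ∈ S, j * f j)! := by
  calc (∏ j ∈ S, ((j - 1)! ^ (f j) * (f j)!)) ∣ ∏ j ∈ S, (j * f j)! :=
        Finset.prod_dvd_prod_of_dvd _ _ (fun j hj => fac_pow_dvd (hS j hj))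
    _ ∣ (∑ j ∈ S, j * f j)! := Nat.prod_factorial_dvd_factorial_sum S _

/-- If `1·e_1 + 2·e_2 + ⋯ + n·e_n = n`, then
`n! · ∏_j 1/(j!^{e_j}·e_j!) · (∑_j e_j) · ∏_j j^{e_j}` is an integer
divisible by `n`. -/
theorem combinatorial_divisibility (n : ℕ) (hn : 1 ≤ n) (e : ℕ → ℕ)
    (he : ∑ j ∈ Finset.Icc 1 n, j * e j = n) :
    ∃ c : ℤ,
      (Nat.factorial n : ℚ) *
          (∏ j ∈ Finset.Icc 1 n,
            (1 : ℚ) / ((Nat.factorial j : ℚ) ^ (e j) * (Nat.factorial (e j) : ℚ))) *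
          (∑ j ∈ Finset.Icc 1 n, (e j : ℚ)) *
          (∏ j ∈ Finset.Icc 1 n, (j : ℚ) ^ (e j))
        = (n : ℚ) * (c : ℚ) := by
  classical
  set S := Finset.Icc 1 n with hS
  -- natural number data
  set P : ℕ := ∏ j ∈ S, (j ! ^ (e j) * (e j)!) with hPdef
  set Q : ℕ := ∏ j ∈ S, j ^ (e j) with hQdef
  set upd : ℕ → ℕ → ℕ := fun k => Function.update e k (e k - 1) with hupd
  set Pf : ℕ → ℕ := fun k => ∏ j ∈ S, ((j - 1)! ^ (upd k j) * (upd k j)!) with hPf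
  set cnat : ℕ := ∑ k ∈ S, (if e k = 0 then 0 else
      Nat.choose (n - 1) (k - 1) * ((n - k)! / Pf k)) with hcnat
  -- the key per-term identity
  have key : ∀ k ∈ S, n * (if e k = 0 then 0 else
      Nat.choose (n - 1) (k - 1) * ((n - k)! / Pf k)) * P = n ! * e k * Q := by
    intro k hkS
    rcases Finset.mem_Icc.mp hkS with ⟨hk1, hkn⟩
    by_cases hek : e k = 0
    · simp [hek]
    push_neg at hek
    have hek1 : 1 ≤ e k := Nat.one_le_iff_ne_zero.mpr hek
    simp only [if_neg hek]
    -- sum for updated function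
    have hkk : k * e k ≤ n := by
      rw [← he]
      exact Finset.single_le_sum (f := fun j => j * e j) (fun i _ => Nat.zero_le _) hkS
    have hkle : k ≤ n := le_trans (Nat.le_mul_of_pos_right k hek1) hkk
    have hsum' : ∑ j ∈ S, j * upd k j = n - k := by
      have h1 : ∑ j ∈ S, j * upd k j
          = k * (e k - 1) + ∑ j ∈ S.erase k, j * e j := by
        rw [← Finset.add_sum_erase S (fun j => j * upd k j) hkS]
        congr 1
        · simp [hupd]
        · apply Finset.sum_congr rfl
          intro j hj
          rw [hupd]
          simp [Function.update_of_ne (Finset.ne_of_mem_erase hj)]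
      have h2 : k * e k + ∑ j ∈ S.erase k, j * e j = n := by
        rw [Finset.add_sum_erase S (fun j => j * e j) hkS, he]
      have h3 : k * e k = k * (e k - 1) + k := by
        conv_lhs => rw [← Nat.succ_pred_eq_of_pos hek1]
        rw [Nat.mul_succ]
        simp [Nat.pred_eq_sub_one]
      omega
    have hdvd : Pf k ∣ (n - k)! := by
      rw [← hsum']
      exact prod_dvd_fac S (upd k) (fun j hj => (Finset.mem_Icc.mp hj).1)
    have hD : (n - k)! / Pf k * Pf k = (n - k)! := Nat.div_mul_cancel hdvd
    -- decompose P
    -- splitting products at k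
    have hupdk : upd k k = e k - 1 := by simp [hupd]
    have hupdne : ∀ j, j ≠ k → upd k j = e j := by
      intro j hj; simp [hupd, Function.update_of_ne hj]
    have split : ∀ (g : ℕ → ℕ → ℕ), ∏ j ∈ S, g j (e j)
        = g k (e k) * ∏ j ∈ S.erase k, g j (e j) :=
      fun g => (Finset.mul_prod_erase S (fun j => g j (e j)) hkS).symm
    have split' : ∀ (g : ℕ → ℕ → ℕ), ∏ j ∈ S, g j (upd k j)
        = g k (e k - 1) * ∏ j ∈ S.erase k, g j (e j) := by
      intro g
      rw [← Finset.mul_prod_erase S (fun j => g j (upd k j)) hkS, hupdk]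
      congr 1
      exact Finset.prod_congr rfl fun j hj => by rw [hupdne j (Finset.ne_of_mem_erase hj)]
    have hpow : ∀ m : ℕ, m ^ e k = m * m ^ (e k - 1) := by
      intro m
      conv_lhs => rw [← Nat.succ_pred_eq_of_pos hek1]
      rw [pow_succ]
      simp [Nat.pred_eq_sub_one]
      ring
    have hfac : (e k)! = e k * (e k - 1)! := by
      conv_lhs => rw [← Nat.succ_pred_eq_of_pos hek1]
      rw [Nat.factorial_succ]
      simp [Nat.pred_eq_sub_one, Nat.sub_add_cancel hek1]
    -- Q = k * Q'
    set Q' : ℕ := ∏ j ∈ S, j ^ (upd k j) with hQ'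
    have hQQ : Q = k * Q' := by
      rw [hQdef, hQ', split (fun j m => j ^ m), split' (fun j m => j ^ m), hpow k]
      ring
    -- F2 = e k * F2'
    have hF2 : (∏ j ∈ S, (e j)!) = e k * ∏ j ∈ S, (upd k j)! := by
      rw [split (fun j m => m !), split' (fun j m => m !), hfac]
      ring
    -- F1 = k! * Q' * G'
    have hF1 : (∏ j ∈ S, j ! ^ (e j)) = k ! * (Q' * ∏ j ∈ S, (j - 1)! ^ (upd k j)) := by
      have step1 : (∏ j ∈ S, j ! ^ (e j)) = k ! * ∏ j ∈ S, j ! ^ (upd k j) := by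
        rw [split (fun j m => j ! ^ m), split' (fun j m => j ! ^ m), hpow (k !)]
        ring
      rw [step1]
      congr 1
      rw [hQ', ← Finset.prod_mul_distrib]
      apply Finset.prod_congr rfl
      intro j hj
      have hj1 : 1 ≤ j := (Finset.mem_Icc.mp hj).1
      rw [← mul_pow]
      congr 1
      rw [← Nat.mul_factorial_pred (by omega : j ≠ 0)]
    -- P = k! * e k * Q' * Pf k
    have hPP : P = k ! * e k * Q' * Pf k := by
      rw [hPdef, Finset.prod_mul_distrib, hF1, hF2, hPf]
      simp only [Finset.prod_mul_distrib]
      ring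
    -- the factorial identity
    have hfact : n * Nat.choose (n - 1) (k - 1) * (n - k)! * k ! = n ! * k := by
      have h1 : Nat.choose (n - 1) (k - 1) * (k - 1)! * (n - 1 - (k - 1))! = (n - 1)! :=
        Nat.choose_mul_factorial_mul_factorial (by omega)
      have h2 : n - 1 - (k - 1) = n - k := by omega
      have h3 : k ! = k * (k - 1)! := by
        rw [← Nat.mul_factorial_pred (by omega : k ≠ 0)]
      have h4 : n ! = n * (n - 1)! := by
        rw [← Nat.mul_factorial_pred (by omega : n ≠ 0)]
      rw [h2] at h1
      rw [h3, h4, ← h1]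
      ring
    calc n * (Nat.choose (n - 1) (k - 1) * ((n - k)! / Pf k)) * P
        = n * Nat.choose (n - 1) (k - 1) * ((n - k)! / Pf k * Pf k) * (k ! * e k * Q') := by
          rw [hPP]; ring
      _ = n * Nat.choose (n - 1) (k - 1) * (n - k)! * k ! * (e k * Q') := by rw [hD]; ring
      _ = n ! * k * (e k * Q') := by rw [hfact]
      _ = n ! * e k * Q := by rw [hQQ]; ring
  -- summed identity over ℕ
  have natEq : n * cnat * P = n ! * (∑ k ∈ S, e k) * Q := by
    rw [hcnat]
    simp only [Finset.mul_sum, Finset.sum_mul]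
    exact Finset.sum_congr rfl key
  -- pass to ℚ
  refine ⟨(cnat : ℤ), ?_⟩
  have hPpos : 0 < P := by
    rw [hPdef]
    apply Finset.prod_pos
    intro j hj
    exact Nat.mul_pos (pow_pos (Nat.factorial_pos j) _) (Nat.factorial_pos _)
  have hP0 : (P : ℚ) ≠ 0 := by exact_mod_cast hPpos.ne'
  have hprodinv : (∏ j ∈ S, (1 : ℚ) / ((j ! : ℚ) ^ (e j) * ((e j)! : ℚ))) = (P : ℚ)⁻¹ := by
    rw [hPdef]
    push_cast
    rw [← Finset.prod_inv_distrib]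
    apply Finset.prod_congr rfl
    intro j hj
    rw [one_div]
  rw [hprodinv]
  have hQc : (∏ j ∈ S, (j : ℚ) ^ (e j)) = (Q : ℚ) := by rw [hQdef]; push_cast; ring
  have hsc : (∑ j ∈ S, (e j : ℚ)) = ((∑ j ∈ S, e j : ℕ) : ℚ) := by push_cast; ring
  rw [hQc, hsc]
  have hcast : (n ! : ℚ) * ((∑ j ∈ S, e j : ℕ) : ℚ) * (Q : ℚ) = (n : ℚ) * (cnat : ℚ) * (P : ℚ) := by
    exact_mod_cast congrArg (Nat.cast : ℕ → ℚ) natEq.symm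
  push_cast
  push_cast at hcast
  field_simp
  linarith [hcast]
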